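/- Let A be a unital JB-algebra and [A] = A/span(e) the quotient by the span of the unit. Then the quotient norm of twice the JB-norm on [A] equals the variation seminorm: for all a ∈ A, 2·inf_{μ∈ℝ} ‖a - μe‖ = max σ(a) - min σ(a). -/

import Mathlib

noncomputable section

variable {A : Type*} [CStarAlgebra A] [PartialOrder A] [StarOrderedRing A]

/-- `M(a/b) = inf {l > 0 : a ≤ l b}`. -/
def Mrel (a b : A) : ℝ := sInf {l : ℝ | 0 < l ∧ a ≤ l • b}

/-- Thompson's metric. -/
def dT (a b : A) : ℝ := Real.log (max (Mrel a b) (Mrel b a))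

/-- Hilbert's metric. -/
def dH (a b : A) : ℝ := Real.log (Mrel a b * Mrel b a)

/-- The variation seminorm `max σ(a) - min σ(a)`. -/
def vnorm (a : A) : ℝ := sSup (spectrum ℝ a) - sInf (spectrum ℝ a)

set_option linter.unusedSectionVars false in
lemma cfc_shift (a : A) (ha : IsSelfAdjoint a) (μ : ℝ) :
    cfc (fun x : ℝ => x - μ) a = a - μ • (1 : A) := by
  rw [cfc_sub (fun x : ℝ => x) (fun _ => μ) a, cfc_id' ℝ a, cfc_const μ a,
    Algebra.algebraMap_eq_smul_one]

/-- Twice the quotient norm on `A / span(1)` equals the variation seminorm. -/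
theorem stmt3 [Nontrivial A] (a : A) (ha : IsSelfAdjoint a) :
    2 * sInf {r : ℝ | ∃ μ : ℝ, r = ‖a - μ • (1 : A)‖} =
      sSup (spectrum ℝ a) - sInf (spectrum ℝ a) := by
  set S := spectrum ℝ a with hS
  have hcpt : IsCompact S := spectrum.isCompact a
  have hne : S.Nonempty := ha.spectrum_nonempty
  set M := sSup S
  set m := sInf S
  have hMmem : M ∈ S := hcpt.sSup_mem hne
  have hmmem : m ∈ S := hcpt.sInf_mem hne
  have hmM : m ≤ M := csInf_le_csSup hne hcpt.isBounded.bddBelow hcpt.isBounded.bddAbove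
  -- key: for each μ, ‖a - μ•1‖ is the sup of |x - μ| over S
  have key : ∀ μ : ℝ, IsGreatest ((fun x => |x - μ|) '' S) ‖a - μ • (1 : A)‖ := by
    intro μ
    have := IsGreatest.norm_cfc (𝕜 := ℝ) (fun x => x - μ) a (by fun_prop) ha
    rwa [cfc_shift a ha μ] at this
  -- lower bound for every element of the set
  have hlb : ∀ r ∈ {r : ℝ | ∃ μ : ℝ, r = ‖a - μ • (1 : A)‖}, (M - m) / 2 ≤ r := by
    rintro r ⟨μ, rfl⟩
    have h1 : |M - μ| ≤ ‖a - μ • (1 : A)‖ := (key μ).2 ⟨M, hMmem, rfl⟩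
    have h2 : |m - μ| ≤ ‖a - μ • (1 : A)‖ := (key μ).2 ⟨m, hmmem, rfl⟩
    have := abs_sub_abs_le_abs_sub (M - μ) (m - μ)
    have h3 := abs_le.mp (le_refl |M - μ|) -- dummy
    nlinarith [abs_le.mp (le_refl |M - μ|), le_abs_self (M - μ), neg_abs_le (m - μ),
      le_abs_self (m - μ), neg_abs_le (M - μ)]
  have hmem : ‖a - ((M + m) / 2) • (1 : A)‖ ∈ {r : ℝ | ∃ μ : ℝ, r = ‖a - μ • (1 : A)‖} :=
    ⟨(M + m) / 2, rfl⟩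
  have hub : ‖a - ((M + m) / 2) • (1 : A)‖ ≤ (M - m) / 2 := by
    rcases (key ((M + m) / 2)).1 with ⟨x, hx, hxe⟩
    rw [← hxe]
    have hxM : x ≤ M := le_csSup hcpt.isBounded.bddAbove hx
    have hxm : m ≤ x := csInf_le hcpt.isBounded.bddBelow hx
    rw [abs_le]; constructor <;> linarith
  have : sInf {r : ℝ | ∃ μ : ℝ, r = ‖a - μ • (1 : A)‖} = (M - m) / 2 := by
    apply le_antisymm
    · exact (csInf_le ⟨(M - m) / 2, hlb⟩ hmem).trans hub
    · exact le_csInf ⟨_, hmem⟩ hlb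
  rw [this]; ring
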